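/- Let X be a Hilbert space, J : X → [0, +∞] proper, convex, lower semicontinuous with finite-dimensional kernel N := ker(J), and suppose J is coercive on the quotient X/N. Let T : X → Y be bounded linear with ker(T) ∩ N = {0}. Then the functional x ↦ (1/2)‖T x − y‖² + α J(x) (α > 0) attains its minimum on X. -/

import Mathlib

open scoped ENNReal

/-- Existence of minimizers for `x ↦ ½‖Tx - y‖² + α J x` when `J : X → [0,+∞]` is proper, convex,
lower semicontinuous, absolutely `p`-homogeneous, has finite-dimensional kernel `N`, is coercive
on the quotient `X/N`, and `ker T ∩ N = {0}`. -/
theorem existence_of_minimizers_projected_variational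
    {X Y : Type*} [NormedAddCommGroup X] [InnerProductSpace ℝ X] [CompleteSpace X]
    [NormedAddCommGroup Y] [InnerProductSpace ℝ Y] [CompleteSpace Y]
    (T : X →L[ℝ] Y) (y : Y) (α : ℝ) (hα : 0 < α)
    (J : X → ℝ≥0∞)
    (hproper : ∃ x, J x ≠ ⊤)
    (hconv : ∀ x z : X, ∀ a b : ℝ, 0 ≤ a → 0 ≤ b → a + b = 1 →
      J (a • x + b • z) ≤ ENNReal.ofReal a * J x + ENNReal.ofReal b * J z)
    (hlsc : LowerSemicontinuous J)
    (p : ℝ) (hp : 1 ≤ p)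
    (hhom : ∀ (c : ℝ) (x : X), J (c • x) = ENNReal.ofReal (|c| ^ p) * J x)
    (N : Submodule ℝ X) [FiniteDimensional ℝ N]
    (hN : (N : Set X) = {x : X | J x = 0})
    (hcoercive : ∀ M : ℝ≥0∞, M ≠ ⊤ → ∃ R : ℝ,
      ∀ x : X, R ≤ Metric.infDist x (N : Set X) → M ≤ J x)
    (hker : LinearMap.ker (T : X →ₗ[ℝ] Y) ⊓ N = ⊥) :
    ∃ xmin : X, ∀ x : X,
      ENNReal.ofReal ((1 / 2) * ‖T xmin - y‖ ^ 2) + ENNReal.ofReal α * J xmin ≤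
      ENNReal.ofReal ((1 / 2) * ‖T x - y‖ ^ 2) + ENNReal.ofReal α * J x := by
  classical
  obtain ⟨x₀, hx₀⟩ := hproper
  set q : X → ℝ := fun x => (1 / 2) * ‖T x - y‖ ^ 2 with hqdef
  set F : X → ℝ≥0∞ := fun x => ENNReal.ofReal (q x) + ENNReal.ofReal α * J x with hFdef
  have hqnn : ∀ x, 0 ≤ q x := fun x => by positivity
  have hqcont : Continuous q := by
    have h1 : Continuous fun x => ‖T x - y‖ := (T.continuous.sub continuous_const).norm
    exact continuous_const.mul (h1.pow 2)
  have hFlsc : LowerSemicontinuous F := by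
    have h1 : LowerSemicontinuous fun x => ENNReal.ofReal (q x) :=
      (ENNReal.continuous_ofReal.comp hqcont).lowerSemicontinuous
    have h2 : LowerSemicontinuous fun x => ENNReal.ofReal α * J x :=
      (ENNReal.continuous_const_mul (a := ENNReal.ofReal α)
        ENNReal.ofReal_ne_top).comp_lowerSemicontinuous hlsc
        (fun a b hab => mul_le_mul_right hab _)
    exact h1.add h2
  -- convexity of F
  have hFconv : ∀ (x z : X) (a b : ℝ), 0 ≤ a → 0 ≤ b → a + b = 1 →
      F (a • x + b • z) ≤ ENNReal.ofReal a * F x + ENNReal.ofReal b * F z := by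
    intro x z a b ha hb hab
    have hy : a • y + b • y = y := by rw [← add_smul, hab, one_smul]
    have h1 : T (a • x + b • z) - y = a • (T x - y) + b • (T z - y) := by
      have h0 : a • (T x - y) + b • (T z - y) = (a • T x + b • T z) - (a • y + b • y) := by
        simp only [smul_sub]; abel
      rw [map_add, map_smul, map_smul, h0, hy]
    have h2 : q (a • x + b • z) ≤ a * q x + b * q z := by
      have hn : ‖T (a • x + b • z) - y‖ ≤ a * ‖T x - y‖ + b * ‖T z - y‖ := by
        rw [h1]
        calc ‖a • (T x - y) + b • (T z - y)‖ ≤ ‖a • (T x - y)‖ + ‖b • (T z - y)‖ :=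
              norm_add_le _ _
          _ = a * ‖T x - y‖ + b * ‖T z - y‖ := by
              rw [norm_smul, norm_smul, Real.norm_of_nonneg ha, Real.norm_of_nonneg hb]
      have h3 : ‖T (a • x + b • z) - y‖ ^ 2 ≤ (a * ‖T x - y‖ + b * ‖T z - y‖) ^ 2 :=
        pow_le_pow_left₀ (norm_nonneg _) hn 2
      simp only [hqdef]
      nlinarith [norm_nonneg (T x - y), norm_nonneg (T z - y),
        sq_nonneg (‖T x - y‖ - ‖T z - y‖), mul_nonneg ha hb]
    have h4 : ENNReal.ofReal (q (a • x + b • z)) ≤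
        ENNReal.ofReal a * ENNReal.ofReal (q x) + ENNReal.ofReal b * ENNReal.ofReal (q z) := by
      rw [← ENNReal.ofReal_mul ha, ← ENNReal.ofReal_mul hb,
        ← ENNReal.ofReal_add (mul_nonneg ha (hqnn x)) (mul_nonneg hb (hqnn z))]
      exact ENNReal.ofReal_le_ofReal h2
    have h5 : ENNReal.ofReal α * J (a • x + b • z) ≤
        ENNReal.ofReal a * (ENNReal.ofReal α * J x) +
          ENNReal.ofReal b * (ENNReal.ofReal α * J z) := by
      calc ENNReal.ofReal α * J (a • x + b • z)
          ≤ ENNReal.ofReal α * (ENNReal.ofReal a * J x + ENNReal.ofReal b * J z) :=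
            mul_le_mul_right (hconv x z a b ha hb hab) _
        _ = _ := by ring
    calc F (a • x + b • z)
        = ENNReal.ofReal (q (a • x + b • z)) + ENNReal.ofReal α * J (a • x + b • z) := rfl
      _ ≤ (ENNReal.ofReal a * ENNReal.ofReal (q x) + ENNReal.ofReal b * ENNReal.ofReal (q z)) +
          (ENNReal.ofReal a * (ENNReal.ofReal α * J x) +
            ENNReal.ofReal b * (ENNReal.ofReal α * J z)) := add_le_add h4 h5
      _ = ENNReal.ofReal a * F x + ENNReal.ofReal b * F z := by simp only [hFdef]; ring
  set m : ℝ≥0∞ := ⨅ x, F x with hm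
  have hm_le : ∀ x, m ≤ F x := fun x => iInf_le _ x
  have hm_top : m ≠ ⊤ := by
    have hFx₀ : F x₀ ≠ ⊤ := by
      simp only [hFdef]
      exact ENNReal.add_ne_top.2 ⟨ENNReal.ofReal_ne_top,
        ENNReal.mul_ne_top ENNReal.ofReal_ne_top hx₀⟩
    exact ne_top_of_le_ne_top hFx₀ (hm_le x₀)
  set ε : ℕ → ℝ≥0∞ := fun k => ((k : ℝ≥0∞) + 1)⁻¹ with hε
  have hεne0 : ∀ k, ε k ≠ 0 := by
    intro k
    simp only [hε, ne_eq, ENNReal.inv_eq_zero]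
    exact ENNReal.add_ne_top.2 ⟨ENNReal.natCast_ne_top k, ENNReal.one_ne_top⟩
  have hεtop : ∀ k, ε k ≠ ⊤ := by
    intro k
    simp only [hε, ne_eq, ENNReal.inv_eq_top, add_eq_zero]
    simp
  set C : ℕ → Set X := fun k => {x | F x ≤ m + ε k} with hC
  have hCne : ∀ k, (C k).Nonempty := by
    intro k
    have h1 : m < m + ε k := ENNReal.lt_add_right hm_top (hεne0 k)
    have h2 : ⨅ x, F x < m + ε k := hm ▸ h1
    obtain ⟨x, hx⟩ := iInf_lt_iff.1 h2
    exact ⟨x, hx.le⟩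
  have hCcl : ∀ k, IsClosed (C k) := fun k => hFlsc.isClosed_preimage (m + ε k)
  have hCconv : ∀ k, Convex ℝ (C k) := by
    intro k u hu v hv a b ha hb hab
    refine le_trans (hFconv u v a b ha hb hab) ?_
    calc ENNReal.ofReal a * F u + ENNReal.ofReal b * F v
        ≤ ENNReal.ofReal a * (m + ε k) + ENNReal.ofReal b * (m + ε k) :=
          add_le_add (mul_le_mul_right hu _) (mul_le_mul_right hv _)
      _ = (ENNReal.ofReal a + ENNReal.ofReal b) * (m + ε k) := (add_mul _ _ _).symm
      _ = 1 * (m + ε k) := by rw [← ENNReal.ofReal_add ha hb, hab, ENNReal.ofReal_one]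
      _ = m + ε k := one_mul _
  have hCanti : ∀ k l, k ≤ l → C l ⊆ C k := by
    intro k l hkl x hx
    refine le_trans hx (add_le_add_right ?_ m)
    exact ENNReal.inv_le_inv.2 (add_le_add_left (Nat.cast_le.2 hkl) 1)
  -- boundedness of C 0
  have hα' : ENNReal.ofReal α ≠ 0 := by
    simp only [ne_eq, ENNReal.ofReal_eq_zero, not_le]
    exact hα
  set b₁ : ℝ≥0∞ := m + ε 0 with hb₁
  have hb₁top : b₁ ≠ ⊤ := ENNReal.add_ne_top.2 ⟨hm_top, hεtop 0⟩
  set M : ℝ≥0∞ := b₁ / ENNReal.ofReal α with hM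
  have hMtop : M ≠ ⊤ := (ENNReal.div_lt_top hb₁top hα').ne
  obtain ⟨R, hR⟩ := hcoercive (M + 1)
    (ENNReal.add_ne_top.2 ⟨hMtop, ENNReal.one_ne_top⟩)
  have hNne : ((N : Set X)).Nonempty := ⟨0, N.zero_mem⟩
  -- antilipschitz bound on N
  set S : N →ₗ[ℝ] Y := (T : X →ₗ[ℝ] Y).comp N.subtype with hS
  have hSker : LinearMap.ker S = ⊥ := by
    rw [LinearMap.ker_eq_bot']
    intro n hn
    have h1 : (n : X) ∈ LinearMap.ker (T : X →ₗ[ℝ] Y) ⊓ N := ⟨hn, n.2⟩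
    rw [hker, Submodule.mem_bot] at h1
    exact Subtype.ext h1
  obtain ⟨K, hK0, hKanti⟩ := S.exists_antilipschitzWith hSker
  set K₁ : ℝ := Real.sqrt (2 * b₁.toReal) + ‖y‖ with hK₁
  have hTx : ∀ x ∈ C 0, ‖T x‖ ≤ K₁ := by
    intro x hx
    have h1 : ENNReal.ofReal (q x) ≤ b₁ := le_trans le_self_add hx
    have h2 : q x ≤ b₁.toReal := (ENNReal.ofReal_le_iff_le_toReal hb₁top).1 h1
    have h3 : ‖T x - y‖ ^ 2 ≤ 2 * b₁.toReal := by
      simp only [hqdef] at h2; linarith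
    have h4 : ‖T x - y‖ ≤ Real.sqrt (2 * b₁.toReal) := Real.le_sqrt_of_sq_le h3
    calc ‖T x‖ = ‖(T x - y) + y‖ := by rw [sub_add_cancel]
      _ ≤ ‖T x - y‖ + ‖y‖ := norm_add_le _ _
      _ ≤ K₁ := add_le_add_left h4 _
  have hdist : ∀ x ∈ C 0, Metric.infDist x (N : Set X) < R := by
    intro x hx
    by_contra h
    push_neg at h
    have h1 : M + 1 ≤ J x := hR x h
    have h2 : ENNReal.ofReal α * J x ≤ b₁ := le_trans le_add_self hx
    have h3 : J x ≤ M := by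
      rw [hM]
      exact (ENNReal.le_div_iff_mul_le (Or.inl hα') (Or.inl ENNReal.ofReal_ne_top)).2
        (by rwa [mul_comm])
    exact (ENNReal.lt_add_right hMtop one_ne_zero).not_ge (le_trans h1 h3)
  have hB : ∃ B, ∀ x ∈ C 0, ‖x‖ ≤ B := by
    refine ⟨R + K * (‖T‖ * R + K₁), ?_⟩
    intro x hx
    obtain ⟨n, hnN, hdn⟩ := (Metric.infDist_lt_iff hNne).1 (hdist x hx)
    have hxn : ‖x - n‖ ≤ R := by rw [← dist_eq_norm]; exact hdn.le
    have hTn : ‖T n‖ ≤ ‖T‖ * R + K₁ := by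
      have h1 : ‖T n - T x‖ ≤ ‖T‖ * R := by
        rw [← map_sub]
        calc ‖T (n - x)‖ ≤ ‖T‖ * ‖n - x‖ := T.le_opNorm _
          _ ≤ ‖T‖ * R := by
            refine mul_le_mul_of_nonneg_left ?_ (norm_nonneg _)
            rwa [norm_sub_rev]
      calc ‖T n‖ = ‖(T n - T x) + T x‖ := by rw [sub_add_cancel]
        _ ≤ ‖T n - T x‖ + ‖T x‖ := norm_add_le _ _
        _ ≤ ‖T‖ * R + K₁ := add_le_add h1 (hTx x hx)
    have hn' : ‖n‖ ≤ K * ‖T n‖ := by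
      have h2 := hKanti.le_mul_dist (⟨n, hnN⟩ : N) 0
      simpa [hS, dist_eq_norm, Submodule.coe_norm] using h2
    calc ‖x‖ = ‖(x - n) + n‖ := by rw [sub_add_cancel]
      _ ≤ ‖x - n‖ + ‖n‖ := norm_add_le _ _
      _ ≤ R + K * (‖T‖ * R + K₁) :=
          add_le_add hxn (le_trans hn' (mul_le_mul_of_nonneg_left hTn K.2))
  obtain ⟨B, hB⟩ := hB
  -- minimal norm points
  have hproj : ∀ k, ∃ v ∈ C k, ‖(0 : X) - v‖ = ⨅ w : C k, ‖(0 : X) - w‖ := fun k =>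
    exists_norm_eq_iInf_of_complete_convex (hCne k) ((hCcl k).isComplete) (hCconv k) 0
  choose xs hxs hxsnorm using hproj
  set d : ℕ → ℝ := fun k => ⨅ w : C k, ‖(0 : X) - w‖ with hd
  have hbdd : ∀ k, BddBelow (Set.range fun w : C k => ‖(0 : X) - w‖) :=
    fun k => ⟨0, Set.forall_mem_range.2 fun _ => norm_nonneg _⟩
  have hxsnorm' : ∀ k, ‖xs k‖ = d k := by
    intro k
    have h1 := hxsnorm k
    rw [zero_sub, norm_neg] at h1
    exact h1
  have hd0 : ∀ k, 0 ≤ d k := by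
    intro k
    haveI := (hCne k).to_subtype
    exact le_ciInf fun w => norm_nonneg _
  have hdmono : Monotone d := by
    intro k l hkl
    haveI := (hCne l).to_subtype
    exact le_ciInf fun w => ciInf_le (hbdd k) ⟨w, hCanti k l hkl w.2⟩
  have hdB : ∀ k, d k ≤ B := by
    intro k
    rw [← hxsnorm' k]
    exact hB _ (hCanti 0 k (Nat.zero_le k) (hxs k))
  set D : ℝ := ⨆ k, d k with hD
  have hbddD : BddAbove (Set.range d) := ⟨B, Set.forall_mem_range.2 hdB⟩
  have hdD : ∀ k, d k ≤ D := fun k => le_ciSup hbddD k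
  have hdtend : Filter.Tendsto d Filter.atTop (nhds D) := tendsto_atTop_ciSup hdmono hbddD
  have key : ∀ (n k l : ℕ), n ≤ k → n ≤ l →
      dist (xs k) (xs l) ≤ Real.sqrt (4 * (D ^ 2 - d n ^ 2)) := by
    intro n k l hk hl
    have hmid : (1 / 2 : ℝ) • xs k + (1 / 2 : ℝ) • xs l ∈ C n :=
      hCconv n (hCanti n k hk (hxs k)) (hCanti n l hl (hxs l))
        (by norm_num) (by norm_num) (by norm_num)
    have hdn : d n ≤ ‖(1 / 2 : ℝ) • xs k + (1 / 2 : ℝ) • xs l‖ := by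
      have h1 := ciInf_le (hbdd n) (⟨_, hmid⟩ : C n)
      rwa [zero_sub, norm_neg] at h1
    have hpar : ‖xs k + xs l‖ ^ 2 + ‖xs k - xs l‖ ^ 2 = 2 * (‖xs k‖ ^ 2 + ‖xs l‖ ^ 2) := by
      have h1 := parallelogram_law_with_norm ℝ (xs k) (xs l)
      simp only [pow_two]
      linarith [h1]
    have hmid2 : ‖xs k + xs l‖ = 2 * ‖(1 / 2 : ℝ) • xs k + (1 / 2 : ℝ) • xs l‖ := by
      have h1 : (1 / 2 : ℝ) • xs k + (1 / 2 : ℝ) • xs l = (1 / 2 : ℝ) • (xs k + xs l) :=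
        (smul_add _ _ _).symm
      rw [h1, norm_smul, Real.norm_of_nonneg (by norm_num : (0:ℝ) ≤ 1/2)]
      ring
    rw [dist_eq_norm]
    apply Real.le_sqrt_of_sq_le
    have h2 : 2 * d n ≤ ‖xs k + xs l‖ := by rw [hmid2]; linarith
    have h3 : (2 * d n) ^ 2 ≤ ‖xs k + xs l‖ ^ 2 :=
      pow_le_pow_left₀ (by linarith [hd0 n]) h2 2
    rw [hxsnorm' k, hxsnorm' l] at hpar
    have h6 : d k ^ 2 ≤ D ^ 2 := pow_le_pow_left₀ (hd0 k) (hdD k) 2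
    have h7 : d l ^ 2 ≤ D ^ 2 := pow_le_pow_left₀ (hd0 l) (hdD l) 2
    linarith [hpar, h3, h6, h7]
  have hbtend : Filter.Tendsto (fun n => Real.sqrt (4 * (D ^ 2 - d n ^ 2)))
      Filter.atTop (nhds 0) := by
    have h2 : Filter.Tendsto (fun n => d n ^ 2) Filter.atTop (nhds (D ^ 2)) := hdtend.pow 2
    have h1 : Filter.Tendsto (fun n => 4 * (D ^ 2 - d n ^ 2)) Filter.atTop
        (nhds (4 * (D ^ 2 - D ^ 2))) := (tendsto_const_nhds.sub h2).const_mul 4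
    have h3 : Filter.Tendsto (fun n => 4 * (D ^ 2 - d n ^ 2)) Filter.atTop (nhds 0) := by
      simpa using h1
    have h4 := (Real.continuous_sqrt.tendsto 0).comp h3
    rw [Real.sqrt_zero] at h4
    exact h4
  have hcauchy : CauchySeq xs :=
    cauchySeq_of_le_tendsto_0 _ (fun k l n hk hl => key n k l hk hl) hbtend
  obtain ⟨xmin, hxmin⟩ := cauchySeq_tendsto_of_complete hcauchy
  have hmem : ∀ k, xmin ∈ C k := by
    intro k
    refine (hCcl k).mem_of_tendsto hxmin ?_
    filter_upwards [Filter.eventually_ge_atTop k] with l hl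
    exact hCanti k l hl (hxs l)
  have hFx : F xmin ≤ m := by
    refine ENNReal.le_of_forall_pos_le_add fun δ hδ _ => ?_
    obtain ⟨n, hn⟩ := ENNReal.exists_inv_nat_lt
      (a := (δ : ℝ≥0∞)) (by exact_mod_cast hδ.ne')
    refine le_trans (hmem n) (add_le_add_right ?_ m)
    calc ε n ≤ ((n : ℝ≥0∞))⁻¹ := ENNReal.inv_le_inv.2 le_self_add
      _ ≤ (δ : ℝ≥0∞) := hn.le
  exact ⟨xmin, fun x => le_trans hFx (hm_le x)⟩
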